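/- The generalized double-semion plaquette operator is a self-adjoint involution (first two relations of Eq. (16), local form): for every local configuration n ∈ {0,1}^12 one has b(n̄) = conj(b(n)) and b(n̄) · b(n) = 1. Consequently, the operator B_p on the space of functions ({0,1}^12 → ℂ) defined by (B_p ψ)(n) = b(n̄) · ψ(n̄) satisfies B_p ∘ B_p = id and B_p is self-adjoint with respect to the standard inner product. -/

import Mathlib

/-- The integer occupation number of edge `j` (edges are numbered `1, …, 12` in the paper;
here `j : Fin 12` denotes edge `j+1`). -/
def occ (n : Fin 12 → ZMod 2) (j : Fin 12) : ℤ := ((n j).val : ℤ)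

/-- The integer exponent `E(n)` of Eqs. (10)–(12): interior edges `1,…,6` are indices
`0,…,5`, outer legs `7,…,12` are indices `6,…,11`. -/
def Eexp (n : Fin 12 → ZMod 2) : ℤ :=
  occ n 11 * (occ n 0 * occ n 5 - (1 - occ n 0) * (1 - occ n 5)) +
  occ n 6 * ((1 - occ n 0) * (1 - occ n 1) - occ n 0 * occ n 1) +
  (1 - occ n 7) * (occ n 1 * (1 - occ n 2) - (1 - occ n 1) * occ n 2) +
  occ n 8 * (occ n 2 * occ n 3 - (1 - occ n 2) * (1 - occ n 3)) +
  occ n 9 * ((1 - occ n 3) * (1 - occ n 4) - occ n 3 * occ n 4) +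
  (1 - occ n 10) * (occ n 4 * (1 - occ n 5) - (1 - occ n 4) * occ n 5)

/-- The exponent `Σ_{j=1}^{6} n_{j−1}(1−n_j)` (with `n₀ := n₆`) of the `(−1)` factor. -/
def signExp (n : Fin 12 → ZMod 2) : ℤ :=
  occ n 5 * (1 - occ n 0) + occ n 0 * (1 - occ n 1) + occ n 1 * (1 - occ n 2) +
  occ n 2 * (1 - occ n 3) + occ n 3 * (1 - occ n 4) + occ n 4 * (1 - occ n 5)

/-- The generalized plaquette phase `b(n) = (−1)^{Σ n_{j−1}(1−n_j)} · i^{E(n)}`. -/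
noncomputable def plaqPhase (n : Fin 12 → ZMod 2) : ℂ :=
  (-1 : ℂ) ^ (signExp n) * Complex.I ^ (Eexp n)

/-- `n̄`: flip the six interior entries, leave the outer legs unchanged. -/
def flipInterior (n : Fin 12 → ZMod 2) : Fin 12 → ZMod 2 :=
  fun j => if (j : ℕ) < 6 then n j + 1 else n j

/-- The generalized plaquette operator `(B_p ψ)(n) = b(n̄) · ψ(n̄)`. -/
noncomputable def plaqOp :
    EuclideanSpace ℂ (Fin 12 → ZMod 2) →ₗ[ℂ] EuclideanSpace ℂ (Fin 12 → ZMod 2) where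
  toFun ψ := WithLp.toLp 2 (fun n => plaqPhase (flipInterior n) * ψ (flipInterior n))
  map_add' ψ φ := by
    refine PiLp.ext fun c => ?_
    simp [mul_add]
  map_smul' a ψ := by
    refine PiLp.ext fun c => ?_
    simp [mul_comm, mul_left_comm, mul_assoc]

lemma occ_flip (n : Fin 12 → ZMod 2) (j : Fin 12) :
    occ (flipInterior n) j = if (j : ℕ) < 6 then 1 - occ n j else occ n j := by
  unfold occ flipInterior
  split
  · generalize n j = a
    revert a; decide
  · rfl

lemma flipInterior_invol : Function.Involutive flipInterior := by
  intro n
  funext j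
  simp only [flipInterior]
  split
  · rw [add_assoc, (by decide : (1:ZMod 2) + 1 = 0), add_zero]
  · rfl

/-- The exact polynomial identity: `E(n̄) + E(n) + 2(s(n̄) + s(n)) = 4·T(n)`. -/
lemma key_sum (n : Fin 12 → ZMod 2) :
    ∃ k : ℤ, (2 * signExp (flipInterior n) + Eexp (flipInterior n)) +
      (2 * signExp n + Eexp n) = 4 * k := by
  refine ⟨occ n 0 * (1 - occ n 1) + occ n 1 * (1 - occ n 2) + occ n 2 * (1 - occ n 3) +
    occ n 3 * (1 - occ n 4) + occ n 4 * (1 - occ n 5) + occ n 5 * (1 - occ n 0), ?_⟩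
  simp only [Eexp, signExp, occ_flip,
    show ((0 : Fin 12) : ℕ) = 0 from rfl, show ((1 : Fin 12) : ℕ) = 1 from rfl,
    show ((2 : Fin 12) : ℕ) = 2 from rfl, show ((3 : Fin 12) : ℕ) = 3 from rfl,
    show ((4 : Fin 12) : ℕ) = 4 from rfl, show ((5 : Fin 12) : ℕ) = 5 from rfl,
    show ((6 : Fin 12) : ℕ) = 6 from rfl, show ((7 : Fin 12) : ℕ) = 7 from rfl,
    show ((8 : Fin 12) : ℕ) = 8 from rfl, show ((9 : Fin 12) : ℕ) = 9 from rfl,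
    show ((10 : Fin 12) : ℕ) = 10 from rfl, show ((11 : Fin 12) : ℕ) = 11 from rfl]
  norm_num
  ring

lemma I_zpow_four_mul (k : ℤ) : Complex.I ^ (4 * k) = 1 := by
  rw [zpow_mul]
  norm_num [show Complex.I ^ (4:ℤ) = 1 by
    rw [show (4:ℤ) = ((4:ℕ):ℤ) from rfl, zpow_natCast, Complex.I_pow_four]]

lemma plaq_as_I (n : Fin 12 → ZMod 2) :
    plaqPhase n = Complex.I ^ (2 * signExp n + Eexp n) := by
  rw [plaqPhase, zpow_add₀ Complex.I_ne_zero, zpow_mul]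
  congr 2
  rw [show (2:ℤ) = ((2:ℕ):ℤ) from rfl, zpow_natCast, Complex.I_sq]

lemma plaq_mul (n : Fin 12 → ZMod 2) :
    plaqPhase (flipInterior n) * plaqPhase n = 1 := by
  obtain ⟨k, hk⟩ := key_sum n
  rw [plaq_as_I, plaq_as_I, ← zpow_add₀ Complex.I_ne_zero, hk, I_zpow_four_mul]

lemma plaq_conj (n : Fin 12 → ZMod 2) :
    plaqPhase (flipInterior n) = starRingEnd ℂ (plaqPhase n) := by
  obtain ⟨k, hk⟩ := key_sum n
  rw [plaq_as_I, plaq_as_I, map_zpow₀, Complex.conj_I, ← Complex.inv_I, inv_zpow,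
    ← zpow_neg,
    show 2 * signExp (flipInterior n) + Eexp (flipInterior n)
      = 4 * k + -(2 * signExp n + Eexp n) by linarith,
    zpow_add₀ Complex.I_ne_zero, I_zpow_four_mul, one_mul]

/-- The generalized double-semion plaquette operator is a self-adjoint involution
(first two relations of Eq. (16), local form): `b(n̄) = conj (b n)` and `b(n̄)·b(n) = 1`
for every local configuration `n`, and consequently `B_p ∘ B_p = id` and `B_p` is
self-adjoint with respect to the standard inner product. -/
theorem plaqOp_selfAdjoint_involution :
    (∀ n : Fin 12 → ZMod 2, plaqPhase (flipInterior n) = starRingEnd ℂ (plaqPhase n)) ∧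
    (∀ n : Fin 12 → ZMod 2, plaqPhase (flipInterior n) * plaqPhase n = 1) ∧
    plaqOp ∘ₗ plaqOp = LinearMap.id ∧
    LinearMap.adjoint plaqOp = plaqOp := by
  refine ⟨plaq_conj, plaq_mul, ?_, ?_⟩
  · apply LinearMap.ext
    intro ψ
    refine PiLp.ext fun n => ?_
    show plaqPhase (flipInterior n) *
      (plaqPhase (flipInterior (flipInterior n)) * ψ (flipInterior (flipInterior n))) = ψ n
    rw [flipInterior_invol n, ← mul_assoc, plaq_mul, one_mul]
  · symm
    rw [LinearMap.eq_adjoint_iff]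
    intro x y
    simp only [plaqOp, LinearMap.coe_mk, AddHom.coe_mk]
    rw [PiLp.inner_apply, PiLp.inner_apply]
    refine Fintype.sum_equiv (Function.Involutive.toPerm _ flipInterior_invol) _ _ (fun i => ?_)
    simp only [Function.Involutive.coe_toPerm, RCLike.inner_apply]
    rw [flipInterior_invol i, map_mul, plaq_conj i, Complex.conj_conj]
    ring
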